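/- arXiv:2312.09381 — 4 statements merged into one kernel-verified Lean document; each statement's English description precedes it below -/
import Mathlib

section
/- Let p be an odd prime and r an integer not divisible by p such that p divides the multiplicative order of r modulo p^N. Then the cyclic subgroup of (Z/p^{N+1}Z)^× generated by r consists exactly of those units k of Z/p^{N+1}Z whose reduction modulo p^N lies in the cyclic subgroup of (Z/p^N Z)^× generated by r. -/
private lemma zmod_pow_eq_one_iff (p : ℕ) [Fact p.Prime] (k : ℕ) (r : ℤ) (n : ℕ) :
    ((r : ZMod (p ^ k))) ^ n = 1 ↔ ((p : ℤ)) ^ k ∣ r ^ n - 1 := by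
  haveI : NeZero (p ^ k) := ⟨pow_ne_zero k (Fact.out (p := p.Prime)).ne_zero⟩
  rw [← sub_eq_zero]
  have : ((r : ZMod (p ^ k))) ^ n - 1 = (((r ^ n - 1 : ℤ) : ZMod (p ^ k))) := by push_cast; ring
  rw [this, ZMod.intCast_zmod_eq_zero_iff_dvd]
  push_cast
  rfl

private lemma key_order (p : ℕ) [Fact p.Prime] (hp : Odd p) (r : ℤ)
    (hr : ¬ (p : ℤ) ∣ r) (N : ℕ) (hN : 1 ≤ N)
    (hord : p ∣ orderOf ((r : ZMod (p ^ N))))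
    (hu2 : IsUnit ((r : ZMod (p ^ N)))) :
    orderOf ((r : ZMod (p ^ (N + 1)))) = p * orderOf ((r : ZMod (p ^ N))) := by
  have hpp : p.Prime := Fact.out
  have hpZ : Prime (p : ℤ) := Nat.prime_iff_prime_int.mp hpp
  set d := orderOf ((r : ZMod (p ^ N))) with hd
  set D := orderOf ((r : ZMod (p ^ (N + 1)))) with hD
  have hd0 : 0 < d := by
    rw [hd, ← hu2.unit_spec, orderOf_units]
    exact orderOf_pos _
  -- p^N ∣ r^d - 1
  have h1 : ((p : ℤ)) ^ N ∣ r ^ d - 1 := by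
    rw [← zmod_pow_eq_one_iff]
    exact pow_orderOf_eq_one _
  have hxd : ¬ (p : ℤ) ∣ r ^ d := fun h => hr (hpZ.dvd_of_dvd_pow h)
  have hxyd : (p : ℤ) ∣ r ^ d - 1 := dvd_trans (dvd_pow_self _ (by omega : N ≠ 0)) h1
  -- p^(N+1) ∤ r^d - 1
  have h2 : ¬ ((p : ℤ)) ^ (N + 1) ∣ r ^ d - 1 := by
    intro hdvd
    obtain ⟨e, he⟩ := hord
    have he0 : 0 < e := Nat.pos_of_ne_zero (fun h => by rw [h, mul_zero] at he; omega)
    have hed : e < d := by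
      rw [he]
      exact (Nat.lt_mul_iff_one_lt_left he0).mpr hpp.one_lt
    have hrd : r ^ d = (r ^ e) ^ p := by rw [← pow_mul, mul_comm, he]
    have hxe : ¬ (p : ℤ) ∣ r ^ e := fun h => hr (hpZ.dvd_of_dvd_pow h)
    -- p ∣ r^e - 1 via Fermat
    have hxye : (p : ℤ) ∣ r ^ e - 1 := by
      have hsp : (p : ℤ) ∣ (r ^ e) ^ p - 1 := by
        rw [← hrd]
        exact dvd_trans (dvd_pow_self _ (Nat.succ_ne_zero N)) hdvd
      have hc : (((r : ZMod p)) ^ e) ^ p = ((r : ZMod p)) ^ e := ZMod.pow_card _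
      have hc1 : (((r : ZMod p)) ^ e) ^ p = 1 := by
        have h0 := (ZMod.intCast_zmod_eq_zero_iff_dvd _ p).mpr hsp
        push_cast at h0
        linear_combination h0
      have : (((r ^ e - 1 : ℤ)) : ZMod p) = 0 := by
        push_cast
        rw [sub_eq_zero, ← hc1, hc]
      exact (ZMod.intCast_zmod_eq_zero_iff_dvd _ p).mp this
    have hlte : emultiplicity ((p : ℤ)) ((r ^ e) ^ p - 1 ^ p)
        = emultiplicity ((p : ℤ)) (r ^ e - 1) + 1 := by
      refine emultiplicity_pow_prime_sub_pow_prime hpZ hp ?_ hxe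
      simpa using hxye
    have hge : (N + 1 : ℕ∞) ≤ emultiplicity ((p : ℤ)) ((r ^ e) ^ p - 1 ^ p) := by
      rw [one_pow, ← hrd]
      exact_mod_cast le_emultiplicity_of_pow_dvd hdvd
    rw [hlte] at hge
    have hNle : (N : ℕ∞) ≤ emultiplicity ((p : ℤ)) (r ^ e - 1) :=
      (WithTop.add_le_add_iff_right (by exact WithTop.one_ne_top)).mp hge
    have hpe : ((p : ℤ)) ^ N ∣ r ^ e - 1 := pow_dvd_of_le_emultiplicity hNle
    have : d ∣ e := by
      rw [hd, orderOf_dvd_iff_pow_eq_one, zmod_pow_eq_one_iff]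
      exact hpe
    exact absurd (Nat.le_of_dvd he0 this) (not_le.mpr hed)
  -- d ∣ D
  have hdD : d ∣ D := by
    have : (ZMod.castHom (pow_dvd_pow p (Nat.le_succ N)) (ZMod (p ^ N)))
        ((r : ZMod (p ^ (N + 1)))) = (r : ZMod (p ^ N)) := map_intCast _ r
    rw [hd, ← this]
    exact orderOf_map_dvd _ _
  -- D ∣ p * d
  have hDpd : D ∣ p * d := by
    rw [hD, orderOf_dvd_iff_pow_eq_one, zmod_pow_eq_one_iff]
    have hlte : emultiplicity ((p : ℤ)) ((r ^ d) ^ p - 1 ^ p)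
        = emultiplicity ((p : ℤ)) (r ^ d - 1) + 1 := by
      refine emultiplicity_pow_prime_sub_pow_prime hpZ hp ?_ hxd
      simpa using hxyd
    have : ((p : ℤ)) ^ (N + 1) ∣ (r ^ d) ^ p - 1 ^ p := by
      apply pow_dvd_of_le_emultiplicity
      rw [hlte]
      push_cast
      exact add_le_add_left (le_emultiplicity_of_pow_dvd h1) 1
    rw [one_pow, ← pow_mul, mul_comm d p] at this
    exact this
  -- D ≠ d
  have hDd : D ≠ d := by
    intro h
    apply h2
    rw [← zmod_pow_eq_one_iff, ← h]
    exact pow_orderOf_eq_one _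
  obtain ⟨c, hc⟩ := hdD
  rw [hc] at hDpd
  have hcp : c ∣ p := (mul_dvd_mul_iff_left (by omega : d ≠ 0)).mp
    (by rwa [mul_comm p d] at hDpd)
  rcases (Nat.Prime.eq_one_or_self_of_dvd hpp c hcp) with h1c | h1c
  · exact absurd (by rw [hc, h1c, mul_one]) hDd
  · rw [hc, h1c, mul_comm]

theorem subgroup_mod_p_pow_succ (p : ℕ) [Fact p.Prime] (hp : Odd p) (r : ℤ)
    (hr : ¬ (p : ℤ) ∣ r) (N : ℕ) (hN : 1 ≤ N)
    (hord : p ∣ orderOf ((r : ZMod (p ^ N))))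
    (hu1 : IsUnit ((r : ZMod (p ^ (N + 1))))) (hu2 : IsUnit ((r : ZMod (p ^ N)))) :
    ∀ k : (ZMod (p ^ (N + 1)))ˣ,
      k ∈ Subgroup.zpowers hu1.unit ↔
        Units.map (ZMod.castHom (pow_dvd_pow p (Nat.le_succ N)) (ZMod (p ^ N))).toMonoidHom k
          ∈ Subgroup.zpowers hu2.unit := by
  have hpp : p.Prime := Fact.out
  haveI : NeZero (p ^ N) := ⟨pow_ne_zero N hpp.ne_zero⟩
  haveI : NeZero (p ^ (N + 1)) := ⟨pow_ne_zero _ hpp.ne_zero⟩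
  set f : (ZMod (p ^ (N + 1)))ˣ →* (ZMod (p ^ N))ˣ :=
    Units.map (ZMod.castHom (pow_dvd_pow p (Nat.le_succ N)) (ZMod (p ^ N))).toMonoidHom with hf
  have hfsurj : Function.Surjective f := ZMod.unitsMap_surjective (pow_dvd_pow p (Nat.le_succ N))
  have hfr : f hu1.unit = hu2.unit := by
    ext
    simp only [hf, Units.coe_map, IsUnit.unit_spec]
    exact map_intCast (ZMod.castHom (pow_dvd_pow p (Nat.le_succ N)) (ZMod (p ^ N))) r
  set H1 := Subgroup.zpowers hu1.unit with hH1
  set H2 := Subgroup.comap f (Subgroup.zpowers hu2.unit) with hH2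
  have hle : H1 ≤ H2 := by
    rw [hH1, hH2, Subgroup.zpowers_le]
    simp only [Subgroup.mem_comap, hfr]
    exact Subgroup.mem_zpowers _
  suffices h : H1 = H2 by
    intro k
    rw [show (k ∈ Subgroup.zpowers hu1.unit) = (k ∈ H1) from rfl, h]
    rfl
  -- cardinalities
  have hcard1 : Nat.card H1 = p * orderOf ((r : ZMod (p ^ N))) := by
    rw [hH1, Nat.card_zpowers, ← key_order p hp r hr N hN hord hu2,
      ← orderOf_units, IsUnit.unit_spec]
  have hcardz : Nat.card (Subgroup.zpowers hu2.unit) = orderOf ((r : ZMod (p ^ N))) := by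
    rw [Nat.card_zpowers, ← orderOf_units, IsUnit.unit_spec]
  have hcardG1 : Nat.card (ZMod (p ^ (N + 1)))ˣ = p * Nat.card (ZMod (p ^ N))ˣ := by
    rw [Nat.card_eq_fintype_card, Nat.card_eq_fintype_card, ZMod.card_units_eq_totient,
      ZMod.card_units_eq_totient, Nat.totient_prime_pow hpp (Nat.succ_pos N),
      Nat.totient_prime_pow hpp (by omega : 0 < N)]
    rw [Nat.succ_sub_one]
    have : p ^ N = p * p ^ (N - 1) := by
      rw [← pow_succ']
      congr 1
      omega
    rw [this]
    ring
  have hidx : H2.index = (Subgroup.zpowers hu2.unit).index :=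
    Subgroup.index_comap_of_surjective _ hfsurj
  have hidx0 : (Subgroup.zpowers hu2.unit).index ≠ 0 := Subgroup.index_ne_zero_of_finite
  have hcard2 : Nat.card H2 = p * orderOf ((r : ZMod (p ^ N))) := by
    have e1 : Nat.card H2 * H2.index = Nat.card (ZMod (p ^ (N + 1)))ˣ :=
      Subgroup.card_mul_index H2
    have e2 : Nat.card (Subgroup.zpowers hu2.unit) * (Subgroup.zpowers hu2.unit).index
        = Nat.card (ZMod (p ^ N))ˣ := Subgroup.card_mul_index _
    rw [hidx, hcardG1, ← e2, hcardz] at e1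
    have : Nat.card H2 * (Subgroup.zpowers hu2.unit).index
        = (p * orderOf ((r : ZMod (p ^ N)))) * (Subgroup.zpowers hu2.unit).index := by
      rw [e1]; ring
    exact Nat.eq_of_mul_eq_mul_right (Nat.pos_of_ne_zero hidx0) this
  exact Subgroup.eq_of_le_of_card_ge hle (by rw [hcard1, hcard2])
end

section
/- Let p be an odd prime and r ∈ Z_p^× not a root of unity. Let N_r be such that p divides the order of r modulo p^{N_r}. Then the closed subgroup G_r generated by r in Z_p^× equals {x ∈ Z_p^× : x mod p^{N_r} ∈ G_{r,N_r}}, where G_{r,N_r} is the subgroup of (Z/p^{N_r}Z)^× generated by r. -/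
open Finset in
lemma PadicClosureAux_step_aux {p : ℕ} [hp : Fact p.Prime] (hodd : Odd p) {m : ℕ} (hm : 1 ≤ m) (w : ℤ_[p]) :
    ((p:ℤ_[p]))^(m+2) ∣ (1 + (p:ℤ_[p])^m * w)^p - (1 + (p:ℤ_[p])^(m+1) * w) := by
  have hp3 : 3 ≤ p := hp.1.two_le.lt_of_ne (by rintro rfl; exact (by norm_num : ¬ Odd 2) hodd) 
  set a : ℤ_[p] := (p:ℤ_[p])^m * w with ha
  have expand : (1 + a)^p = ∑ k ∈ range (p+1), a^k * (p.choose k) := by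
    rw [add_comm]
    rw [add_pow]
    simp [one_pow]
  have h0 : (0:ℕ) < p + 1 := by omega
  have h1 : (1:ℕ) < p + 1 := by omega
  rw [expand, range_eq_Ico, Finset.sum_eq_sum_Ico_succ_bot h0,
    Finset.sum_eq_sum_Ico_succ_bot (by omega : 1 < p + 1)]
  have : a ^ 0 * (p.choose 0) + (a ^ 1 * (p.choose 1) + ∑ k ∈ Ico 2 (p+1), a^k * (p.choose k))
      - (1 + (p:ℤ_[p])^(m+1) * w) = ∑ k ∈ Ico 2 (p+1), a^k * (p.choose k) := by
    simp [ha, pow_succ, pow_one]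
    ring
  rw [this]
  apply Finset.dvd_sum
  intro k hk
  simp only [mem_Ico] at hk
  rcases eq_or_lt_of_le (Nat.lt_succ_iff.mp hk.2) with hkp | hkp
  · -- k = p
    have : (p:ℤ_[p])^(m+2) ∣ a ^ k := by
      rw [ha, mul_pow, ← pow_mul]
      exact Dvd.dvd.mul_right (pow_dvd_pow _ (by nlinarith [hk.1])) _
    exact this.mul_right _
  · -- k < p
    have hch : (p:ℕ) ∣ p.choose k := Nat.Prime.dvd_choose_self hp.1 (by omega) hkp
    obtain ⟨c, hc⟩ := hch
    have : a ^ k * (p.choose k) = (p:ℤ_[p])^(m*k+1) * (w ^ k * c) := by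
      rw [ha, mul_pow, ← pow_mul, hc]
      push_cast
      ring
    rw [this]
    exact Dvd.dvd.mul_right (pow_dvd_pow _ (by nlinarith [hk.1, hm])) _


lemma PadicClosureAux_unit_add_p_mul {p : ℕ} [hp : Fact p.Prime] {w z : ℤ_[p]} (hw : IsUnit w) :
    IsUnit (w + p * z) := by
  rw [PadicInt.isUnit_iff] at hw ⊢
  rcases eq_or_ne z 0 with rfl | hz
  · simpa using hw
  have hlt : ‖(p:ℤ_[p]) * z‖ < 1 := by
    have h1 : ‖(p:ℤ_[p])‖ < 1 := by
      rw [PadicInt.norm_p]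
      rw [inv_lt_one_iff₀]
      right
      exact_mod_cast hp.1.one_lt
    have h2 : ‖z‖ ≤ 1 := PadicInt.norm_le_one z
    have h3 : ‖(p:ℤ_[p]) * z‖ = ‖(p:ℤ_[p])‖ * ‖z‖ := norm_mul _ _
    rw [h3]
    nlinarith [norm_nonneg (p:ℤ_[p]), norm_nonneg z]
  rw [PadicInt.norm_add_eq_max_of_ne (hw ▸ (hlt.trans_le hw.ge).ne'), hw]
  exact max_eq_left (le_of_lt (hw ▸ hlt))

lemma PadicClosureAux_step {p : ℕ} [hp : Fact p.Prime] (hodd : Odd p) {m : ℕ} (hm : 1 ≤ m) {x w : ℤ_[p]}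
    (hw : IsUnit w) (hx : x = 1 + (p:ℤ_[p])^m * w) :
    ∃ w' : ℤ_[p], IsUnit w' ∧ x^p = 1 + (p:ℤ_[p])^(m+1) * w' := by
  obtain ⟨z, hz⟩ := PadicClosureAux_step_aux hodd hm w
  refine ⟨w + p * z, PadicClosureAux_unit_add_p_mul hw, ?_⟩
  have : x ^ p = (1 + (p:ℤ_[p])^(m+1) * w) + (p:ℤ_[p])^(m+2) * z := by
    rw [hx]; linear_combination hz
  rw [this]; ring

lemma PadicClosureAux_iter {p : ℕ} [hp : Fact p.Prime] (hodd : Odd p) {m : ℕ} (hm : 1 ≤ m) {x w : ℤ_[p]}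
    (hw : IsUnit w) (hx : x = 1 + (p:ℤ_[p])^m * w) (j : ℕ) :
    ∃ w' : ℤ_[p], IsUnit w' ∧ x^(p^j) = 1 + (p:ℤ_[p])^(m+j) * w' := by
  induction j with
  | zero => exact ⟨w, hw, by simpa using hx⟩
  | succ j ih =>
    obtain ⟨w', hw', hxj⟩ := ih
    obtain ⟨w'', hw'', h⟩ := PadicClosureAux_step hodd (by omega : 1 ≤ m + j) hw' hxj
    exact ⟨w'', hw'', by rw [pow_succ, pow_mul, h, ← add_assoc]⟩


lemma PadicClosureAux_toZModPow_sub_iff {p : ℕ} [hp : Fact p.Prime] (n : ℕ) (a b : ℤ_[p]) :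
    PadicInt.toZModPow n a = PadicInt.toZModPow n b ↔ ((p:ℤ_[p]))^n ∣ (a - b) := by
  rw [← sub_eq_zero, ← map_sub, ← RingHom.mem_ker, PadicInt.ker_toZModPow,
    Ideal.mem_span_singleton]

lemma PadicClosureAux_Nr_ge_two {p : ℕ} [hp : Fact p.Prime] (r : ℤ_[p]ˣ) {Nr : ℕ} (hNr1 : 1 ≤ Nr)
    (hNrdvd : p ∣ orderOf (PadicInt.toZModPow Nr (r : ℤ_[p]))) : 2 ≤ Nr := by
  by_contra h
  interval_cases Nr
  haveI : NeZero (p^1) := ⟨pow_ne_zero _ hp.1.ne_zero⟩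
  have h1 : PadicInt.toZModPow 1 (r : ℤ_[p]) =
      ((Units.map (PadicInt.toZModPow 1).toMonoidHom r : (ZMod (p^1))ˣ) : ZMod (p^1)) := rfl
  rw [h1, orderOf_units] at hNrdvd
  have h2 := orderOf_dvd_card (x := Units.map (PadicInt.toZModPow 1).toMonoidHom r)
  have h3 : p ∣ Fintype.card (ZMod (p^1))ˣ := hNrdvd.trans h2
  rw [ZMod.card_units_eq_totient, pow_one, Nat.totient_prime hp.1] at h3
  have h4 := hp.1.two_le
  have := Nat.le_of_dvd (by omega) h3
  omega


-- Lemma A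
lemma PadicClosureAux_special_elt {p : ℕ} [hp : Fact p.Prime] (r : ℤ_[p]ˣ) {Nr : ℕ} (hNr2 : 2 ≤ Nr)
    (hNrdvd : p ∣ orderOf (PadicInt.toZModPow Nr (r : ℤ_[p])))
    (hNrmin : ∀ M : ℕ, 1 ≤ M → p ∣ orderOf (PadicInt.toZModPow M (r : ℤ_[p])) → Nr ≤ M) :
    ∃ s : ℕ, 0 < s ∧ ∃ c : ℤ_[p], IsUnit c ∧
      ((r ^ s : ℤ_[p]ˣ) : ℤ_[p]) = 1 + (p:ℤ_[p])^(Nr - 1) * c := by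
  set M := Nr - 1 with hM
  haveI : NeZero (p^M) := ⟨pow_ne_zero _ hp.1.ne_zero⟩
  haveI : NeZero (p^Nr) := ⟨pow_ne_zero _ hp.1.ne_zero⟩
  set ru : (ZMod (p^M))ˣ := Units.map (PadicInt.toZModPow M).toMonoidHom r with hru
  set s := orderOf ru with hs
  have hs_pos : 0 < s := orderOf_pos ru
  have hords : orderOf (PadicInt.toZModPow M (r : ℤ_[p])) = s := by
    rw [hs, ← orderOf_units]; rfl
  have hps : ¬ (p ∣ s) := by
    intro hdvd
    have := hNrmin M (by omega) (hords ▸ hdvd)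
    omega
  have h1 : PadicInt.toZModPow M ((r^s : ℤ_[p]ˣ) : ℤ_[p]) = PadicInt.toZModPow M 1 := by
    rw [map_one]
    have : PadicInt.toZModPow M ((r^s : ℤ_[p]ˣ) : ℤ_[p]) = ((ru^s : (ZMod (p^M))ˣ) : ZMod (p^M)) := by
      simp [hru, map_pow]
    rw [this, pow_orderOf_eq_one ru, Units.val_one]
  rw [PadicClosureAux_toZModPow_sub_iff] at h1
  obtain ⟨c, hc⟩ := h1
  refine ⟨s, hs_pos, c, ?_, by linear_combination hc⟩
  by_contra hcu
  rw [PadicInt.not_isUnit_iff, PadicInt.norm_lt_one_iff_dvd] at hcu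
  obtain ⟨d, hd⟩ := hcu
  have h2 : PadicInt.toZModPow Nr ((r^s : ℤ_[p]ˣ) : ℤ_[p]) = PadicInt.toZModPow Nr 1 := by
    rw [PadicClosureAux_toZModPow_sub_iff]
    refine ⟨d, ?_⟩
    rw [hc, hd]
    have : (p:ℤ_[p])^Nr = (p:ℤ_[p])^M * p := by
      rw [← pow_succ]; congr 1; omega
    rw [this]; ring
  -- hence orderOf (toZModPow Nr r) divides s
  have h3 : (PadicInt.toZModPow Nr (r : ℤ_[p]))^s = 1 := by
    rw [map_one] at h2
    rw [← map_pow]; norm_cast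
  have h4 := orderOf_dvd_of_pow_eq_one h3
  exact hps (hNrdvd.trans h4)


lemma PadicClosureAux_core {p : ℕ} [hp : Fact p.Prime] (hodd : Odd p) (r : ℤ_[p]ˣ) {Nr : ℕ} (hNr2 : 2 ≤ Nr)
    (hNrdvd : p ∣ orderOf (PadicInt.toZModPow Nr (r : ℤ_[p])))
    (hNrmin : ∀ M : ℕ, 1 ≤ M → p ∣ orderOf (PadicInt.toZModPow M (r : ℤ_[p])) → Nr ≤ M)
    {n : ℕ} (hn : Nr ≤ n) {x : ℤ_[p]} (hx : IsUnit x) {k : ℤ}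
    (hcong : PadicInt.toZModPow Nr x = PadicInt.toZModPow Nr ((r ^ k : ℤ_[p]ˣ) : ℤ_[p])) :
    ∃ m : ℤ, PadicInt.toZModPow n x = PadicInt.toZModPow n ((r ^ m : ℤ_[p]ˣ) : ℤ_[p]) := by
  haveI : NeZero (p^n) := ⟨pow_ne_zero _ hp.1.ne_zero⟩
  haveI : NeZero (p^Nr) := ⟨pow_ne_zero _ hp.1.ne_zero⟩
  obtain ⟨s, hs_pos, c, hc_unit, hc⟩ := PadicClosureAux_special_elt r hNr2 hNrdvd hNrmin
  set M := Nr - 1 with hM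
  have hM1 : 1 ≤ M := by omega
  have hMN : M + 1 = Nr := by omega
  -- powers of r^s
  have hiter : ∀ j : ℕ, ∃ w : ℤ_[p], IsUnit w ∧
      ((r ^ (s * p^j) : ℤ_[p]ˣ) : ℤ_[p]) = 1 + (p:ℤ_[p])^(M+j) * w := by
    intro j
    obtain ⟨w, hw, hw2⟩ := PadicClosureAux_iter hodd hM1 hc_unit hc j
    exact ⟨w, hw, by rw [pow_mul]; push_cast at hw2 ⊢; rw [hw2]⟩
  -- the units-level maps
  set φ : ℤ_[p]ˣ →* (ZMod (p^n))ˣ := Units.map (PadicInt.toZModPow n).toMonoidHom with hφ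
  set ψ : ℤ_[p]ˣ →* (ZMod (p^Nr))ˣ := Units.map (PadicInt.toZModPow Nr).toMonoidHom with hψ
  have hφval : ∀ v : ℤ_[p]ˣ, ((φ v : (ZMod (p^n))ˣ) : ZMod (p^n)) = PadicInt.toZModPow n (v : ℤ_[p]) :=
    fun v => rfl
  have hψval : ∀ v : ℤ_[p]ˣ, ((ψ v : (ZMod (p^Nr))ˣ) : ZMod (p^Nr)) = PadicInt.toZModPow Nr (v : ℤ_[p]) :=
    fun v => rfl
  set π : (ZMod (p^n))ˣ →* (ZMod (p^Nr))ˣ := ZMod.unitsMap (pow_dvd_pow p hn) with hπ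
  have hcomp : ∀ v : ℤ_[p]ˣ, π (φ v) = ψ v := by
    intro v
    apply Units.ext
    rw [hπ, ZMod.unitsMap_def]
    show (ZMod.castHom (pow_dvd_pow p hn) (ZMod (p^Nr))) ((φ v : (ZMod (p^n))ˣ) : ZMod (p^n)) = _
    rw [hφval, hψval, ← PadicInt.zmod_cast_comp_toZModPow Nr n hn]
    rfl
  set R : (ZMod (p^n))ˣ := φ r with hR
  set u : (ZMod (p^n))ˣ := R ^ (s * p) with hu
  -- value of powers of u
  have hupow : ∀ j : ℕ, ((u ^ (p^j) : (ZMod (p^n))ˣ) : ZMod (p^n)) =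
      PadicInt.toZModPow n ((r ^ (s * p^(j+1)) : ℤ_[p]ˣ) : ℤ_[p]) := by
    intro j
    rw [hu, ← pow_mul, hR]
    rw [← map_pow]
    rw [hφval]
    congr 2
    rw [mul_assoc, ← pow_succ']
  -- order of u
  have hu_ord : orderOf u = p^(n - Nr) := by
    have h1 : u ^ (p^(n - Nr)) = 1 := by
      apply Units.ext
      rw [hupow, Units.val_one]
      obtain ⟨w, hw, hw2⟩ := hiter (n - Nr + 1)
      rw [hw2]
      have : M + (n - Nr + 1) = n := by omega
      rw [this, map_add, map_one, map_mul, map_pow]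
      simp only [map_natCast]
      rw [← Nat.cast_pow, ZMod.natCast_self, zero_mul, add_zero]
    have h2 := orderOf_dvd_of_pow_eq_one h1
    obtain ⟨i, hi, hio⟩ := (Nat.dvd_prime_pow hp.1).mp h2
    rcases eq_or_lt_of_le hi with hieq | hilt
    · rw [hio, hieq]
    · exfalso
      have h3 : u ^ (p^i) = 1 := by rw [← hio, pow_orderOf_eq_one]
      have h4 := congrArg (Units.val) h3
      rw [hupow, Units.val_one] at h4
      obtain ⟨w, hw, hw2⟩ := hiter (i + 1)
      rw [hw2, ← map_one (PadicInt.toZModPow n)] at h4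
      rw [PadicClosureAux_toZModPow_sub_iff] at h4
      have h5 : (p:ℤ_[p])^n ∣ (p:ℤ_[p])^(M + (i+1)) * w := by
        convert h4 using 1; ring
      have h6 : (p:ℤ_[p])^n ∣ (p:ℤ_[p])^(M + (i+1)) := (hw.dvd_mul_right).mp h5
      -- contradiction since M + i + 1 < n
      obtain ⟨d, hd⟩ := h6
      have hlt : M + (i + 1) < n := by omega
      have : (p:ℤ_[p])^(M+(i+1)) * 1 = (p:ℤ_[p])^(M+(i+1)) * ((p:ℤ_[p])^(n - (M+(i+1))) * d) := by
        rw [mul_one, ← mul_assoc, ← pow_add]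
        convert hd using 3
        omega
      have hpne : (p:ℤ_[p]) ≠ 0 := Nat.cast_ne_zero.mpr hp.1.ne_zero
      have hcancel := mul_left_cancel₀ (pow_ne_zero _ hpne) this
      have he : n - (M+(i+1)) = (n - (M+(i+1)) - 1) + 1 := by omega
      rw [he, pow_succ] at hcancel
      have hdv : (p:ℤ_[p]) ∣ 1 := ⟨(p:ℤ_[p])^(n - (M+(i+1)) - 1) * d, by rw [hcancel]; ring⟩
      have hup := isUnit_of_dvd_one hdv
      rw [PadicInt.isUnit_iff, PadicInt.norm_p] at hup
      have h2p : (2:ℝ) ≤ p := by exact_mod_cast hp.1.two_le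
      rw [inv_eq_one] at hup
      have hp1 : p = 1 := by exact_mod_cast hup
      have := hp.1.one_lt
      omega
  -- kernel of reduction
  set K : Subgroup (ZMod (p^n))ˣ := π.ker with hK
  have hcardK : Nat.card K = p^(n - Nr) := by
    have hsurj : Function.Surjective π := ZMod.unitsMap_surjective (pow_dvd_pow p hn)
    have e := QuotientGroup.quotientKerEquivOfSurjective π hsurj
    have h1 : Nat.card (ZMod (p^n))ˣ = Nat.card (ZMod (p^Nr))ˣ * Nat.card K := by
      rw [Subgroup.card_eq_card_quotient_mul_card_subgroup K, Nat.card_congr e.toEquiv]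
    rw [Nat.card_eq_fintype_card, Nat.card_eq_fintype_card (α := (ZMod (p^Nr))ˣ),
      ZMod.card_units_eq_totient, ZMod.card_units_eq_totient,
      Nat.totient_prime_pow hp.1 (by omega), Nat.totient_prime_pow hp.1 (by omega)] at h1
    have hpos : 0 < p^(Nr-1) * (p-1) := by
      have := hp.1.one_lt
      exact Nat.mul_pos (Nat.pow_pos hp.1.pos) (by omega)
    have h2 : p^(Nr-1)*(p-1) * p^(n-Nr) = p^(n-1)*(p-1) := by
      rw [mul_right_comm, ← pow_add]
      congr 2
      omega
    exact (Nat.eq_of_mul_eq_mul_left hpos (h2.trans h1)).symm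
  have hu_mem : u ∈ K := by
    rw [hK, MonoidHom.mem_ker]
    have hφu : u = φ (r^(s*p)) := by rw [hu, hR, map_pow]
    rw [hφu, hcomp]
    apply Units.ext
    rw [Units.val_one, hψval]
    obtain ⟨w, hw, hw2⟩ := hiter 1
    rw [pow_one] at hw2
    rw [hw2, hMN, map_add, map_one, map_mul, map_pow]
    simp only [map_natCast]
    rw [← Nat.cast_pow, ZMod.natCast_self, zero_mul, add_zero]
  have hzu : Subgroup.zpowers u = K := by
    apply Subgroup.eq_of_le_of_card_ge (Subgroup.zpowers_le.mpr hu_mem)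
    rw [hcardK, Nat.card_zpowers, hu_ord]
  have hzleR : Subgroup.zpowers u ≤ Subgroup.zpowers R :=
    Subgroup.zpowers_le.mpr (by rw [hu]; exact Subgroup.pow_mem _ (Subgroup.mem_zpowers R) _)
  set X : (ZMod (p^n))ˣ := φ hx.unit with hX
  have hgmem : X * (R^k)⁻¹ ∈ K := by
    rw [hK, MonoidHom.mem_ker, map_mul, map_inv, map_zpow, hX, hR, hcomp, hcomp]
    rw [mul_inv_eq_one]
    apply Units.ext
    rw [← map_zpow, hψval, hψval, IsUnit.unit_spec]
    exact hcong
  have hXmem : X ∈ Subgroup.zpowers R := by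
    have h1 : X = (X * (R^k)⁻¹) * R^k := by group
    rw [h1]
    exact Subgroup.mul_mem _ (hzleR (hzu ▸ hgmem)) (Subgroup.zpow_mem _ (Subgroup.mem_zpowers R) k)
  obtain ⟨m, hm⟩ := Subgroup.mem_zpowers_iff.mp hXmem
  refine ⟨m, ?_⟩
  have h2 : PadicInt.toZModPow n x = ((X : (ZMod (p^n))ˣ) : ZMod (p^n)) := by
    rw [hX, hφval, IsUnit.unit_spec]
  rw [h2, ← hm, ← map_zpow, hφval]


lemma PadicClosureAux_toZModPow_eq_iff_norm {p : ℕ} [hp : Fact p.Prime] (n : ℕ) (a b : ℤ_[p]) :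
    PadicInt.toZModPow n a = PadicInt.toZModPow n b ↔ ‖a - b‖ ≤ (p:ℝ)^(-(n:ℤ)) := by
  rw [PadicClosureAux_toZModPow_sub_iff, ← Ideal.mem_span_singleton,
    ← PadicInt.norm_le_pow_iff_mem_span_pow]

theorem closure_powers_eq_congruence_class (p : ℕ) [Fact p.Prime] (hp : Odd p) (r : ℤ_[p]ˣ)
    (hroot : ∀ n : ℕ, 0 < n → r ^ n ≠ 1) (Nr : ℕ) (hNr1 : 1 ≤ Nr)
    (hNrdvd : p ∣ orderOf (PadicInt.toZModPow Nr (r : ℤ_[p])))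
    (hNrmin : ∀ M : ℕ, 1 ≤ M → p ∣ orderOf (PadicInt.toZModPow M (r : ℤ_[p])) → Nr ≤ M) :
    closure {x : ℤ_[p] | ∃ k : ℤ, x = ((r ^ k : ℤ_[p]ˣ) : ℤ_[p])} =
      {x : ℤ_[p] | IsUnit x ∧
        ∃ k : ℤ, PadicInt.toZModPow Nr x = PadicInt.toZModPow Nr ((r ^ k : ℤ_[p]ˣ) : ℤ_[p])} := by
  have hprime : Fact p.Prime := inferInstance
  have hp1R : (1:ℝ) < p := by exact_mod_cast hprime.1.one_lt
  have hNr2 : 2 ≤ Nr := PadicClosureAux_Nr_ge_two r hNr1 hNrdvd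
  have heps : (0:ℝ) < (p:ℝ)^(-(Nr:ℤ)) := by positivity
  have hle1 : (p:ℝ)^(-(Nr:ℤ)) ≤ 1 := by
    apply zpow_le_one_of_nonpos₀ hp1R.le
    omega
  apply Set.Subset.antisymm
  · apply closure_minimal
    · rintro y ⟨k, rfl⟩
      exact ⟨(r^k).isUnit, k, rfl⟩
    · rw [← isOpen_compl_iff, Metric.isOpen_iff]
      intro x hx
      refine ⟨(p:ℝ)^(-(Nr:ℤ)), heps, ?_⟩
      intro y hy
      simp only [Set.mem_compl_iff, Set.mem_setOf_eq] at hx ⊢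
      intro hyR
      apply hx
      obtain ⟨hyu, k, hk⟩ := hyR
      rw [Metric.mem_ball, dist_eq_norm] at hy
      have hxy : ‖x - y‖ ≤ (p:ℝ)^(-(Nr:ℤ)) := by
        rw [show x - y = -(y - x) by ring, norm_neg]
        exact hy.le
      have hcong : PadicInt.toZModPow Nr x = PadicInt.toZModPow Nr y :=
        (PadicClosureAux_toZModPow_eq_iff_norm Nr x y).mpr hxy
      constructor
      · rw [PadicInt.isUnit_iff]
        have hyn : ‖y‖ = 1 := PadicInt.isUnit_iff.mp hyu
        have hlt : ‖x - y‖ < 1 := by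
          rcases lt_or_eq_of_le (hxy.trans hle1) with h | h
          · exact h
          · exfalso
            have h2 : (p:ℝ)^(-(Nr:ℤ)) < 1 := by
              apply zpow_lt_one_of_neg₀ hp1R
              omega
            nlinarith [hxy]
        have hxe : x = y + (x - y) := by ring
        rw [hxe, PadicInt.norm_add_eq_max_of_ne (by rw [hyn]; exact hlt.ne'), hyn]
        exact max_eq_left hlt.le
      · exact ⟨k, hcong.trans hk⟩
  · rintro x ⟨hxu, k, hk⟩
    rw [Metric.mem_closure_iff]
    intro ε hε
    obtain ⟨j, hj⟩ := PadicInt.exists_pow_neg_lt p hε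
    obtain ⟨m, hm⟩ := PadicClosureAux_core hp r hNr2 hNrdvd hNrmin (le_max_right j Nr) hxu hk
    refine ⟨_, ⟨m, rfl⟩, ?_⟩
    rw [dist_eq_norm]
    have h1 : ‖x - ((r^m : ℤ_[p]ˣ) : ℤ_[p])‖ ≤ (p:ℝ)^(-((max j Nr : ℕ):ℤ)) :=
      (PadicClosureAux_toZModPow_eq_iff_norm _ _ _).mp hm
    refine lt_of_le_of_lt (h1.trans ?_) hj
    apply zpow_le_zpow_right₀ hp1R.le
    omega
end

section
/- Let p be an odd prime and r ∈ Z_p^× not a root of unity, and let G_r be the closure of the cyclic group generated by r in Z_p^×. Then the quotient group Z_p^× / G_r is finite, and it is isomorphic to (Z/p^{N_r}Z)^× / G_{r,N_r}, where N_r is the smallest N such that p divides the order of r modulo p^N and G_{r,N_r} is the subgroup of (Z/p^{N_r}Z)^× generated by r. -/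
open PadicInt Finset

section Aux

variable {p : ℕ} [hp : Fact p.Prime]

lemma toZModPow_eq_iff' (M : ℕ) (x y : ℤ_[p]) :
    PadicInt.toZModPow M x = PadicInt.toZModPow M y ↔ ‖x - y‖ ≤ (p:ℝ)^(-(M:ℤ)) := by
  rw [norm_le_pow_iff_mem_span_pow, ← ker_toZModPow, RingHom.mem_ker, map_sub, sub_eq_zero]

lemma padic_inv_contOn : ContinuousOn (Ring.inverse : ℤ_[p] → ℤ_[p]) {x | IsUnit x} := by
  rw [Metric.continuousOn_iff]
  intro x hx ε hε
  refine ⟨ε, hε, fun y hy hxy => ?_⟩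
  obtain ⟨u, rfl⟩ := hx
  obtain ⟨v, rfl⟩ := hy
  rw [Ring.inverse_unit, Ring.inverse_unit]
  have : ((v⁻¹ : ℤ_[p]ˣ) : ℤ_[p]) - ((u⁻¹ : ℤ_[p]ˣ) : ℤ_[p])
      = (v⁻¹ : ℤ_[p]ˣ) * (((u : ℤ_[p]) - v)) * (u⁻¹ : ℤ_[p]ˣ) := by
    simp [mul_sub, sub_mul]
  rw [dist_eq_norm, this]
  calc ‖((v⁻¹ : ℤ_[p]ˣ) : ℤ_[p]) * (((u : ℤ_[p]) - v)) * ((u⁻¹ : ℤ_[p]ˣ) : ℤ_[p])‖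
      = ‖((v⁻¹ : ℤ_[p]ˣ) : ℤ_[p])‖ * ‖((u : ℤ_[p]) - v)‖ * ‖((u⁻¹ : ℤ_[p]ˣ) : ℤ_[p])‖ := by
        rw [norm_mul, norm_mul]
    _ = ‖((u : ℤ_[p]) - v)‖ := by rw [norm_units, norm_units]; ring
    _ < ε := by rw [← dist_eq_norm, dist_comm]; exact hxy

lemma padic_units_isEmbedding' : Topology.IsEmbedding (Units.val : ℤ_[p]ˣ → ℤ_[p]) :=
  Units.isEmbedding_val_mk' padic_inv_contOn (fun u => Ring.inverse_unit u)

lemma unitsMap_surj' (M : ℕ) (hM : 1 ≤ M) :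
    Function.Surjective (Units.map (PadicInt.toZModPow (p := p) M).toMonoidHom) := by
  intro v
  haveI : NeZero (p ^ M) := ⟨pow_ne_zero _ hp.out.ne_zero⟩
  set n : ℕ := ((v : ZMod (p ^ M)).val) with hn
  have hcast : PadicInt.toZModPow (p := p) M (n : ℤ_[p]) = (v : ZMod (p ^ M)) := by
    rw [map_natCast, hn, ZMod.natCast_val, ZMod.cast_id]
  have hunit : IsUnit ((n : ℕ) : ℤ_[p]) := by
    rw [PadicInt.isUnit_iff]
    by_contra h
    have hlt : ‖((n : ℕ) : ℤ_[p])‖ < 1 := lt_of_le_of_ne (PadicInt.norm_le_one _) h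
    rw [PadicInt.norm_lt_one_iff_dvd] at hlt
    have h1 : PadicInt.toZModPow (p := p) 1 ((n : ℕ) : ℤ_[p]) = 0 := by
      rw [← RingHom.mem_ker, ker_toZModPow, Ideal.mem_span_singleton, pow_one]
      exact hlt
    have h2 : IsUnit (PadicInt.toZModPow (p := p) 1 ((n : ℕ) : ℤ_[p])) := by
      rw [← PadicInt.cast_toZModPow 1 M hM, hcast]
      exact (v.isUnit).map (ZMod.castHom (pow_dvd_pow p hM) (ZMod (p ^ 1)))
    rw [h1] at h2
    haveI : Nontrivial (ZMod (p ^ 1)) := by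
      rw [pow_one]; exact ZMod.nontrivial p
    exact not_isUnit_zero h2
  obtain ⟨u, hu⟩ := hunit
  refine ⟨u, Units.ext ?_⟩
  show PadicInt.toZModPow M (u : ℤ_[p]) = (v : ZMod (p ^ M))
  rw [hu, hcast]

lemma pow_one_add_eq (c : ℤ_[p]) (i : ℕ) : ∃ d : ℤ_[p], (1+c)^i = 1 + i*c + c^2*d := by
  induction i with
  | zero => exact ⟨0, by ring⟩
  | succ n ih =>
    obtain ⟨d, hd⟩ := ih
    exact ⟨d + n + d*c, by rw [pow_succ, hd]; push_cast; ring⟩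

lemma norm_pow_one_add_sub' (c : ℤ_[p]) (i : ℕ) : ‖(1+c)^i - 1 - i*c‖ ≤ ‖c‖^2 := by
  obtain ⟨d, hd⟩ := pow_one_add_eq c i
  rw [hd]
  have h : (1:ℤ_[p]) + i*c + c^2*d - 1 - i*c = c^2*d := by ring
  rw [h, norm_mul]
  calc ‖c^2‖ * ‖d‖ ≤ ‖c^2‖ * 1 := by
        apply mul_le_mul_of_nonneg_left (PadicInt.norm_le_one d) (norm_nonneg _)
    _ = ‖c‖^2 := by rw [mul_one, norm_pow]

lemma norm_pow_p_sub_one' (hodd : Odd p) (c : ℤ_[p]) (N : ℕ) (hN : 1 ≤ N)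
    (hc : ‖c‖ = (p:ℝ)^(-(N:ℤ))) : ‖(1+c)^p - 1‖ = (p:ℝ)^(-(N+1:ℤ)) := by
  have hp2 : 2 ≤ p := hp.out.two_le
  have hp3 : 3 ≤ p := by
    rcases Nat.lt_or_ge p 3 with h | h
    · interval_cases p <;> simp [Nat.odd_iff] at hodd
    · exact h
  have hp1 : (1:ℝ) < p := by exact_mod_cast hp.out.one_lt
  have hp0 : (0:ℝ) < p := by positivity
  have hsplit : (1+c)^p - 1 = p*c + ∑ k ∈ Ico 2 (p+1), c^k * (p.choose k) := by
    have hap := add_pow c (1:ℤ_[p]) p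
    simp only [one_pow, mul_one] at hap
    have h2 : (∑ k ∈ range 2, c^k * (p.choose k : ℤ_[p]))
        + ∑ k ∈ Ico 2 (p+1), c^k * (p.choose k : ℤ_[p])
        = ∑ k ∈ range (p+1), c^k * (p.choose k : ℤ_[p]) := by
      rw [range_eq_Ico, range_eq_Ico]
      exact Finset.sum_Ico_consecutive (m := 0) (n := 2) (k := p+1) (fun k => c^k * (p.choose k : ℤ_[p])) (by omega) (by omega)
    rw [add_comm 1 c, hap, ← h2]
    simp [Finset.sum_range_succ, Nat.choose_one_right]
    ring
  have hbound : ‖∑ k ∈ Ico 2 (p+1), c^k * (p.choose k : ℤ_[p])‖ ≤ (p:ℝ)^(-(2*N+1:ℤ)) := by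
    apply IsUltrametricDist.norm_sum_le_of_forall_le_of_nonneg (by positivity)
    intro k hk
    simp only [Finset.mem_Ico] at hk
    rw [norm_mul]
    rcases eq_or_lt_of_le (Nat.lt_succ_iff.mp hk.2) with hkp | hkp
    · calc ‖c^k‖ * ‖(p.choose k : ℤ_[p])‖ ≤ ‖c^k‖ * 1 :=
            mul_le_mul_of_nonneg_left (PadicInt.norm_le_one _) (norm_nonneg _)
        _ = (p:ℝ)^((-(N:ℤ))*k) := by
            rw [mul_one, norm_pow, hc, ← zpow_natCast ((p:ℝ)^(-(N:ℤ))), ← zpow_mul]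
        _ ≤ (p:ℝ)^(-(2*N+1:ℤ)) := by
            apply zpow_le_zpow_right₀ (le_of_lt hp1)
            subst hkp
            nlinarith [hk.1, hN, hp3]
    · have hdvd : (p:ℤ) ∣ (p.choose k : ℤ) := by
        exact_mod_cast Nat.Prime.dvd_choose_self hp.out (by omega) hkp
      have h1 : ‖(p.choose k : ℤ_[p])‖ ≤ (p:ℝ)^(-(1:ℤ)) := by
        have := (PadicInt.norm_int_le_pow_iff_dvd (p := p) (k := (p.choose k : ℤ)) (n := 1)).mpr
          (by simpa using hdvd)
        simpa using this
      have h2 : ‖c^k‖ ≤ (p:ℝ)^(-(2*N:ℤ)) := by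
        rw [norm_pow, hc, ← zpow_natCast ((p:ℝ)^(-(N:ℤ))), ← zpow_mul]
        apply zpow_le_zpow_right₀ (le_of_lt hp1)
        nlinarith [hk.1, hN]
      calc ‖c^k‖ * ‖(p.choose k : ℤ_[p])‖ ≤ (p:ℝ)^(-(2*N:ℤ)) * (p:ℝ)^(-(1:ℤ)) :=
            mul_le_mul h2 h1 (norm_nonneg _) (by positivity)
        _ = (p:ℝ)^(-(2*N+1:ℤ)) := by rw [← zpow_add₀ (ne_of_gt hp0)]; ring_nf
  have hpc : ‖(p:ℤ_[p])*c‖ = (p:ℝ)^(-(N+1:ℤ)) := by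
    rw [norm_mul, PadicInt.norm_p, hc, ← zpow_neg_one, ← zpow_add₀ (ne_of_gt hp0)]
    ring_nf
  have hlt : ‖∑ k ∈ Ico 2 (p+1), c^k * (p.choose k : ℤ_[p])‖ < ‖(p:ℤ_[p])*c‖ := by
    apply lt_of_le_of_lt hbound
    rw [hpc]
    apply zpow_lt_zpow_right₀ hp1
    omega
  rw [hsplit, PadicInt.norm_add_eq_max_of_ne (ne_of_gt hlt), max_eq_left (le_of_lt hlt), hpc]

-- P4
lemma norm_s_pow_pow (hodd : Odd p) (s : ℤ_[p]ˣ) (N₀ : ℕ) (hN₀ : 1 ≤ N₀)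
    (hs : ‖(s:ℤ_[p]) - 1‖ = (p:ℝ)^(-(N₀:ℤ))) (e : ℕ) :
    ‖((s^(p^e) : ℤ_[p]ˣ) : ℤ_[p]) - 1‖ = (p:ℝ)^(-(N₀+e:ℤ)) := by
  induction e with
  | zero => simpa using hs
  | succ n ih =>
    have h1 : ((s^(p^(n+1)) : ℤ_[p]ˣ) : ℤ_[p]) = (1 + (((s^(p^n) : ℤ_[p]ˣ) : ℤ_[p]) - 1))^p := by
      rw [add_sub_cancel, pow_succ, pow_mul, Units.val_pow_eq_pow_val]
    rw [h1, norm_pow_p_sub_one' hodd _ (N₀+n) (by omega) (by rw [ih]; norm_num) ]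
    push_cast
    ring_nf

-- P5: induction step + full approximation
lemma approx_all' (hodd : Odd p) (r : ℤ_[p]ˣ) (N₀ : ℕ) (hN₀ : 1 ≤ N₀) (t : ℕ)
    (hs : ‖((r^t : ℤ_[p]ˣ) : ℤ_[p]) - 1‖ = (p:ℝ)^(-(N₀:ℤ)))
    (u : ℤ_[p]ˣ) :
    ∀ M : ℕ, N₀ ≤ M → (∃ k : ℤ, ‖(u : ℤ_[p]) - ((r^k : ℤ_[p]ˣ) : ℤ_[p])‖ ≤ (p:ℝ)^(-(M:ℤ))) →
      ∀ M' : ℕ, M ≤ M' → ∃ k : ℤ, ‖(u : ℤ_[p]) - ((r^k : ℤ_[p]ˣ) : ℤ_[p])‖ ≤ (p:ℝ)^(-(M':ℤ)) := by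
  have hp0 : (0:ℝ) < p := by exact_mod_cast hp.out.pos
  intro M hM hbase M' hMM'
  induction M' with
  | zero => omega
  | succ n ih =>
    rcases Nat.lt_or_ge n M with h | h
    · -- M = n+1
      have : M = n + 1 := by omega
      subst this
      exact hbase
    · obtain ⟨k, hk⟩ := ih (by omega)
      -- step from n to n+1
      set s : ℤ_[p]ˣ := r ^ t with hsdef
      set e : ℕ := n - N₀ with hedef
      set g : ℤ_[p]ˣ := s ^ (p ^ e) with hgdef
      set b : ℤ_[p] := (g : ℤ_[p]) - 1 with hbdef
      have hbnorm : ‖b‖ = (p:ℝ)^(-(n:ℤ)) := by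
        have := norm_s_pow_pow hodd s N₀ hN₀ hs e
        rw [hbdef, hgdef, this]
        congr 1
        omega
      set w : ℤ_[p]ˣ := u * (r^k)⁻¹ with hwdef
      set a : ℤ_[p] := (w : ℤ_[p]) - 1 with hadef
      have haw : a = ((u : ℤ_[p]) - ((r^k : ℤ_[p]ˣ) : ℤ_[p])) * (((r^k)⁻¹ : ℤ_[p]ˣ) : ℤ_[p]) := by
        rw [hadef, hwdef]
        push_cast
        have : ((r^k : ℤ_[p]ˣ) : ℤ_[p]) * (((r^k)⁻¹ : ℤ_[p]ˣ) : ℤ_[p]) = 1 := by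
          rw [← Units.val_mul, mul_inv_cancel, Units.val_one]
        rw [sub_mul, this]
      have hanorm : ‖a‖ ≤ (p:ℝ)^(-(n:ℤ)) := by
        rw [haw, norm_mul, PadicInt.norm_units, mul_one]
        exact hk
      -- divide
      have hbne : b ≠ 0 := by
        intro h
        rw [h, norm_zero] at hbnorm
        exact absurd hbnorm.symm (by positivity)
      have hdvd : b ∣ a := by
        have hval : ∃ v : ℕ, ((p:ℤ_[p])^v ∣ a) ∧ ∃ U : ℤ_[p]ˣ, b = ↑U * (p:ℤ_[p])^v := by
          refine ⟨(b.valuation : ℤ).natAbs, ?_, PadicInt.unitCoeff hbne, PadicInt.unitCoeff_spec hbne⟩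
          rw [← Ideal.mem_span_singleton, ← norm_le_pow_iff_mem_span_pow]
          have hv : ‖b‖ = (p:ℝ)^(-((b.valuation : ℤ).natAbs:ℤ)) := by
            rw [PadicInt.norm_eq_zpow_neg_valuation hbne]
            congr 1
          rw [← hv, hbnorm]
          exact hanorm
        obtain ⟨v, hva, U, hUb⟩ := hval
        obtain ⟨c, hc⟩ := hva
        refine ⟨(↑(U⁻¹) : ℤ_[p]) * c, ?_⟩
        rw [hc, hUb]
        have : ((U : ℤ_[p]) * (p:ℤ_[p])^v) * ((↑(U⁻¹):ℤ_[p]) * c)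
            = ((U : ℤ_[p]) * (↑(U⁻¹):ℤ_[p])) * ((p:ℤ_[p])^v * c) := by ring
        rw [this, ← Units.val_mul, mul_inv_cancel, Units.val_one, one_mul]
      obtain ⟨q, hq⟩ := hdvd
      set i : ℕ := (PadicInt.toZModPow 1 q).val with hidef
      have hqi : ‖q - (i:ℤ_[p])‖ ≤ (p:ℝ)^(-(1:ℤ)) := by
        have : PadicInt.toZModPow 1 q = PadicInt.toZModPow 1 (i:ℤ_[p]) := by
          haveI : NeZero (p^1) := ⟨pow_ne_zero _ hp.out.ne_zero⟩
          rw [map_natCast, hidef, ZMod.natCast_val, ZMod.cast_id]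
        have h2 := (toZModPow_eq_iff' 1 q (i:ℤ_[p])).mp this
        simpa using h2
      have key : ‖(u : ℤ_[p]) - ((r^(k + (t * p^e * i : ℕ)) : ℤ_[p]ˣ) : ℤ_[p])‖ ≤ (p:ℝ)^(-(n+1:ℤ)) := by
        have hru : (r^(k + (t * p^e * i : ℕ)) : ℤ_[p]ˣ) = (r^k) * g^i := by
          rw [zpow_add, zpow_natCast, hgdef, hsdef, ← pow_mul, ← pow_mul, mul_assoc]
        have hwg : (u : ℤ_[p]) - (((r^k) * g^i : ℤ_[p]ˣ) : ℤ_[p])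
            = ((w : ℤ_[p]) - ((g^i : ℤ_[p]ˣ) : ℤ_[p])) * ((r^k : ℤ_[p]ˣ) : ℤ_[p]) := by
          rw [hwdef]
          push_cast
          have : (((r^k)⁻¹ : ℤ_[p]ˣ) : ℤ_[p]) * ((r^k : ℤ_[p]ˣ) : ℤ_[p]) = 1 := by
            rw [← Units.val_mul, inv_mul_cancel, Units.val_one]
          rw [sub_mul, mul_assoc, this, mul_one]
          ring
        have hsplit : (w : ℤ_[p]) - ((g^i : ℤ_[p]ˣ) : ℤ_[p])
            = (a - i*b) - (((1+b)^i : ℤ_[p]) - 1 - i*b) := by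
          rw [hadef, hbdef]
          push_cast [Units.val_pow_eq_pow_val]
          ring_nf
        have h1 : ‖a - i*b‖ ≤ (p:ℝ)^(-(n+1:ℤ)) := by
          rw [hq]
          have hfac : b*q - (i:ℤ_[p])*b = b*(q - (i:ℤ_[p])) := by ring
          rw [hfac, norm_mul, hbnorm]
          calc (p:ℝ)^(-(n:ℤ)) * ‖q - (i:ℤ_[p])‖ ≤ (p:ℝ)^(-(n:ℤ)) * (p:ℝ)^(-(1:ℤ)) := by
                apply mul_le_mul_of_nonneg_left hqi (by positivity)
            _ = (p:ℝ)^(-(n+1:ℤ)) := by rw [← zpow_add₀ (ne_of_gt hp0)]; ring_nf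
        have h2 : ‖((1+b)^i : ℤ_[p]) - 1 - i*b‖ ≤ (p:ℝ)^(-(n+1:ℤ)) := by
          apply le_trans (norm_pow_one_add_sub' b i)
          rw [hbnorm, ← zpow_natCast, ← zpow_mul]
          apply zpow_le_zpow_right₀ (by exact_mod_cast hp.out.one_le) ?_
          push_cast
          omega
        rw [hru, hwg, norm_mul, PadicInt.norm_units, mul_one, hsplit]
        calc ‖(a - i*b) - (((1+b)^i : ℤ_[p]) - 1 - i*b)‖
            ≤ max ‖a - i*b‖ ‖((1+b)^i : ℤ_[p]) - 1 - i*b‖ := by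
              rw [sub_eq_add_neg]
              refine le_trans (PadicInt.nonarchimedean _ _) ?_
              rw [norm_neg]
          _ ≤ (p:ℝ)^(-(n+1:ℤ)) := max_le h1 h2
      exact ⟨_, by exact_mod_cast key⟩

end Aux

theorem quotient_by_closure_finite_and_iso (p : ℕ) [Fact p.Prime] (hp : Odd p) (r : ℤ_[p]ˣ)
    (hroot : ∀ n : ℕ, 0 < n → r ^ n ≠ 1) (Nr : ℕ) (hNr1 : 1 ≤ Nr)
    (hNrdvd : p ∣ orderOf (PadicInt.toZModPow Nr (r : ℤ_[p])))
    (hNrmin : ∀ M : ℕ, 1 ≤ M → p ∣ orderOf (PadicInt.toZModPow M (r : ℤ_[p])) → Nr ≤ M) :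
    Finite (ℤ_[p]ˣ ⧸ (Subgroup.zpowers r).topologicalClosure) ∧
      Nonempty ((ℤ_[p]ˣ ⧸ (Subgroup.zpowers r).topologicalClosure) ≃*
        ((ZMod (p ^ Nr))ˣ ⧸
          Subgroup.zpowers (Units.map (PadicInt.toZModPow Nr).toMonoidHom r))) := by
  have hprime : p.Prime := Fact.out
  have hp2 : 2 ≤ p := hprime.two_le
  have hp0R : (0:ℝ) < p := by exact_mod_cast hprime.pos
  have hp1R : (1:ℝ) < p := by exact_mod_cast hprime.one_lt
  -- order of ring elt = order of unit
  have horder : ∀ M : ℕ, orderOf (PadicInt.toZModPow M (r : ℤ_[p]))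
      = orderOf (Units.map (PadicInt.toZModPow (p := p) M).toMonoidHom r) := by
    intro M
    rw [← orderOf_units]
    rfl
  -- Nr ≥ 2
  have hNr2 : 2 ≤ Nr := by
    by_contra hcon
    have hNr1' : Nr = 1 := by omega
    subst hNr1'
    haveI : NeZero (p ^ 1) := ⟨pow_ne_zero _ hprime.ne_zero⟩
    have hdvd : orderOf (Units.map (PadicInt.toZModPow (p := p) 1).toMonoidHom r)
        ∣ Fintype.card (ZMod (p ^ 1))ˣ := orderOf_dvd_card
    rw [ZMod.card_units_eq_totient, Nat.totient_prime_pow hprime one_pos] at hdvd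
    norm_num at hdvd
    rw [horder 1] at hNrdvd
    have : p ∣ p - 1 := hNrdvd.trans hdvd
    have := Nat.le_of_dvd (by omega) this
    omega
  haveI : NeZero (p ^ Nr) := ⟨pow_ne_zero _ hprime.ne_zero⟩
  haveI : NeZero (p ^ (Nr - 1)) := ⟨pow_ne_zero _ hprime.ne_zero⟩
  -- the order t at level Nr - 1
  set t : ℕ := orderOf (Units.map (PadicInt.toZModPow (p := p) (Nr-1)).toMonoidHom r) with htdef
  have hpt : ¬ p ∣ t := by
    intro hd
    have := hNrmin (Nr - 1) (by omega) (by rw [horder]; exact hd)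
    omega
  have htpos : 0 < t := orderOf_pos _
  -- compatibility of levels
  have hcomp : (Units.map (ZMod.castHom (pow_dvd_pow p (Nat.sub_le Nr 1)) (ZMod (p^(Nr-1)))).toMonoidHom)
      (Units.map (PadicInt.toZModPow (p := p) Nr).toMonoidHom r)
      = Units.map (PadicInt.toZModPow (p := p) (Nr-1)).toMonoidHom r := by
    ext
    show ZMod.castHom _ (ZMod (p^(Nr-1))) ((PadicInt.toZModPow Nr) (r:ℤ_[p]))
        = (PadicInt.toZModPow (Nr-1)) (r:ℤ_[p])
    rw [ZMod.castHom_apply, PadicInt.cast_toZModPow _ _ (Nat.sub_le Nr 1)]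
  -- norm of s - 1
  have hsle : ‖((r^t : ℤ_[p]ˣ) : ℤ_[p]) - 1‖ ≤ (p:ℝ)^(-((Nr-1:ℕ):ℤ)) := by
    rw [← toZModPow_eq_iff']
    have h1 : (Units.map (PadicInt.toZModPow (p := p) (Nr-1)).toMonoidHom r)^t = 1 :=
      pow_orderOf_eq_one _
    have := congrArg Units.val h1
    rw [← map_pow] at this
    simpa using this
  have hsnle : ¬ ‖((r^t : ℤ_[p]ˣ) : ℤ_[p]) - 1‖ ≤ (p:ℝ)^(-(Nr:ℤ)) := by
    intro hle
    rw [← toZModPow_eq_iff'] at hle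
    have h1 : (Units.map (PadicInt.toZModPow (p := p) Nr).toMonoidHom r)^t = 1 := by
      ext
      rw [Units.val_pow_eq_pow_val, Units.val_one]
      show ((PadicInt.toZModPow Nr) (r:ℤ_[p]))^t = 1
      rw [← map_pow, ← Units.val_pow_eq_pow_val]
      simpa using hle
    have hd1 : orderOf (Units.map (PadicInt.toZModPow (p := p) Nr).toMonoidHom r) ∣ t :=
      orderOf_dvd_of_pow_eq_one h1
    have hd2 : t ∣ orderOf (Units.map (PadicInt.toZModPow (p := p) Nr).toMonoidHom r) := by
      rw [htdef, ← hcomp]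
      exact orderOf_map_dvd _ _
    have heq := Nat.dvd_antisymm hd1 hd2
    rw [horder Nr, heq] at hNrdvd
    exact hpt hNrdvd
  have hsnorm : ‖((r^t : ℤ_[p]ˣ) : ℤ_[p]) - 1‖ = (p:ℝ)^(-((Nr-1:ℕ):ℤ)) := by
    refine le_antisymm hsle ?_
    by_contra hlt
    push_neg at hlt
    rw [PadicInt.norm_lt_pow_iff_norm_le_pow_sub_one] at hlt
    apply hsnle
    refine hlt.trans (le_of_eq ?_)
    congr 1
    push_cast [Nat.cast_sub hNr1]
    ring
  -- the subgroup H and its preimage K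
  set H : Subgroup (ZMod (p ^ Nr))ˣ :=
    Subgroup.zpowers (Units.map (PadicInt.toZModPow Nr).toMonoidHom r) with hHdef
  set K : Subgroup ℤ_[p]ˣ :=
    H.comap (Units.map (PadicInt.toZModPow (p := p) Nr).toMonoidHom) with hKdef
  -- base approximation for elements of K
  have hbase : ∀ u : ℤ_[p]ˣ, u ∈ K →
      ∃ k : ℤ, ‖(u : ℤ_[p]) - ((r^k : ℤ_[p]ˣ) : ℤ_[p])‖ ≤ (p:ℝ)^(-(Nr:ℤ)) := by
    intro u hu
    obtain ⟨k, hk⟩ := Subgroup.mem_zpowers_iff.mp hu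
    refine ⟨k, ?_⟩
    rw [← toZModPow_eq_iff']
    have : Units.map (PadicInt.toZModPow (p := p) Nr).toMonoidHom (r^k)
        = Units.map (PadicInt.toZModPow (p := p) Nr).toMonoidHom u := by
      rw [map_zpow]; exact hk
    exact (congrArg Units.val this).symm
  -- K is contained in the closure
  have hKle : K ≤ (Subgroup.zpowers r).topologicalClosure := by
    intro u hu
    have happrox := approx_all' hp r (Nr - 1) (by omega) t (by
      convert hsnorm using 3) u Nr (by omega) (hbase u hu)
    show u ∈ (Subgroup.zpowers r).topologicalClosure.carrier
    have hcar : ((Subgroup.zpowers r).topologicalClosure : Set ℤ_[p]ˣ)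
        = closure ((Subgroup.zpowers r : Subgroup ℤ_[p]ˣ) : Set ℤ_[p]ˣ) := rfl
    show u ∈ ((Subgroup.zpowers r).topologicalClosure : Set ℤ_[p]ˣ)
    rw [hcar, padic_units_isEmbedding'.closure_eq_preimage_closure_image,
      Set.mem_preimage]
    rw [Metric.mem_closure_iff]
    intro ε hε
    obtain ⟨m, hm⟩ := PadicInt.exists_pow_neg_lt p hε
    obtain ⟨k, hk⟩ := happrox (max m Nr) (le_max_right _ _)
    refine ⟨((r^k : ℤ_[p]ˣ) : ℤ_[p]), ⟨r^k, ⟨k, rfl⟩, rfl⟩, ?_⟩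
    rw [dist_eq_norm]
    calc ‖(u : ℤ_[p]) - ((r^k : ℤ_[p]ˣ) : ℤ_[p])‖ ≤ (p:ℝ)^(-((max m Nr : ℕ):ℤ)) := hk
      _ ≤ (p:ℝ)^(-(m:ℤ)) := by
          apply zpow_le_zpow_right₀ (le_of_lt hp1R)
          simp only [neg_le_neg_iff]
          exact_mod_cast le_max_left m Nr
      _ < ε := hm
  -- K is closed
  have hKclosed : IsClosed (K : Set ℤ_[p]ˣ) := by
    have hKset : (K : Set ℤ_[p]ˣ) = ⋃ h ∈ (H : Set (ZMod (p ^ Nr))ˣ),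
        (Units.val ⁻¹' {z : ℤ_[p] | PadicInt.toZModPow Nr z = (h : ZMod (p ^ Nr))}) := by
      ext x
      simp only [Set.mem_iUnion, Set.mem_preimage, Set.mem_setOf_eq, SetLike.mem_coe]
      constructor
      · intro hx
        exact ⟨Units.map (PadicInt.toZModPow (p := p) Nr).toMonoidHom x, hx, rfl⟩
      · rintro ⟨h, hh, hval⟩
        have : Units.map (PadicInt.toZModPow (p := p) Nr).toMonoidHom x = h :=
          Units.ext hval
        show Units.map (PadicInt.toZModPow (p := p) Nr).toMonoidHom x ∈ H
        rw [this]; exact hh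
    rw [hKset]
    apply Set.Finite.isClosed_biUnion (Set.toFinite _)
    intro h _
    apply IsClosed.preimage Units.continuous_val
    rcases Set.eq_empty_or_nonempty {z : ℤ_[p] | PadicInt.toZModPow Nr z = (h : ZMod (p ^ Nr))}
      with hemp | ⟨z₀, hz₀⟩
    · rw [hemp]; exact isClosed_empty
    · have : {z : ℤ_[p] | PadicInt.toZModPow Nr z = (h : ZMod (p ^ Nr))}
          = Metric.closedBall z₀ ((p:ℝ)^(-(Nr:ℤ))) := by
        ext z
        rw [Metric.mem_closedBall, dist_eq_norm, Set.mem_setOf_eq, ← hz₀,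
          toZModPow_eq_iff']
      rw [this]
      exact Metric.isClosed_closedBall
  -- zpowers r ≤ K
  have hle2 : Subgroup.zpowers r ≤ K := by
    rw [Subgroup.zpowers_le]
    exact Subgroup.mem_zpowers _
  have hKeq : (Subgroup.zpowers r).topologicalClosure = K :=
    le_antisymm (Subgroup.topologicalClosure_minimal _ hle2 hKclosed) hKle
  -- the quotient map
  set φ : ℤ_[p]ˣ →* (ZMod (p ^ Nr))ˣ ⧸ H :=
    (QuotientGroup.mk' H).comp (Units.map (PadicInt.toZModPow (p := p) Nr).toMonoidHom)
    with hφdef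
  have hφsurj : Function.Surjective φ :=
    (QuotientGroup.mk'_surjective H).comp (unitsMap_surj' Nr (by omega))
  have hker : φ.ker = K := by
    ext x
    rw [MonoidHom.mem_ker, hφdef, MonoidHom.comp_apply, QuotientGroup.mk'_apply,
      QuotientGroup.eq_one_iff]
    rfl
  have e : (ℤ_[p]ˣ ⧸ (Subgroup.zpowers r).topologicalClosure) ≃* ((ZMod (p ^ Nr))ˣ ⧸ H) :=
    (QuotientGroup.quotientMulEquivOfEq (hKeq.trans hker.symm)).trans
      (QuotientGroup.quotientKerEquivOfSurjective φ hφsurj)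
  haveI : Finite ((ZMod (p ^ Nr))ˣ ⧸ H) :=
    Finite.of_surjective _ (QuotientGroup.mk'_surjective H)
  exact ⟨Finite.of_equiv _ e.symm.toEquiv, ⟨e⟩⟩
end

section
/- Let p be a prime, N ≥ 1, and r ∈ Z_p with |r|_p = p^{-N}. Then the set D = { x_0 + x_1 r + x_2 r^2 + ... + x_n r^n : n ≥ 0, each x_i an integer with 0 ≤ x_i ≤ p^N − 1 } is dense in Z_p. -/
theorem digit_expansion_dense (p : ℕ) [Fact p.Prime] (N : ℕ) (hN : 1 ≤ N) (r : ℤ_[p])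
    (hr : ‖r‖ = (p : ℝ) ^ (-(N : ℤ))) :
    Dense {x : ℤ_[p] | ∃ (n : ℕ) (c : ℕ → ℕ), (∀ i, c i ≤ p ^ N - 1) ∧
      x = ∑ i ∈ Finset.range (n + 1), (c i : ℤ_[p]) * r ^ i} := by
  have hp : (1 : ℝ) < p := by exact_mod_cast (Fact.out : p.Prime).one_lt
  have hr0 : r ≠ 0 := by
    intro h
    rw [h, norm_zero] at hr
    have : (0:ℝ) < (p : ℝ) ^ (-(N : ℤ)) := zpow_pos (by linarith) _
    linarith [hr ▸ this]
  -- valuation r = N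
  have hval : r.valuation = N := by
    have := PadicInt.norm_eq_zpow_neg_valuation hr0
    rw [hr] at this
    have := zpow_right_injective₀ (by linarith : (0:ℝ) < p) (by linarith : (p:ℝ) ≠ 1) this.symm
    omega
  -- r ∣ p^N
  have hdvd : r ∣ (p : ℤ_[p]) ^ N := by
    obtain ⟨u, hu⟩ : ∃ u : ℤ_[p]ˣ, r = (u : ℤ_[p]) * (p : ℤ_[p]) ^ N := by
      refine ⟨PadicInt.unitCoeff hr0, ?_⟩
      have hspec := PadicInt.unitCoeff_spec hr0
      rw [hval] at hspec
      simpa using hspec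
    refine ⟨(u⁻¹ : ℤ_[p]ˣ), ?_⟩
    rw [hu, mul_comm ((u : ℤ_[p])) _, mul_assoc]
    simp
  -- digit step
  have step : ∀ x : ℤ_[p], ∃ (c0 : ℕ) (z : ℤ_[p]), c0 < p ^ N ∧ x = (c0 : ℤ_[p]) + r * z := by
    intro x
    refine ⟨x.appr N, ?_⟩
    have h1 := PadicInt.appr_spec N x
    rw [Ideal.mem_span_singleton] at h1
    obtain ⟨w, hw⟩ := dvd_trans hdvd h1
    exact ⟨w, x.appr_lt N, by rw [← hw]; ring⟩
  -- main induction
  have key : ∀ (n : ℕ) (x : ℤ_[p]), ∃ c : ℕ → ℕ, (∀ i, c i < p ^ N) ∧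
      ∃ w : ℤ_[p], x = (∑ i ∈ Finset.range (n + 1), (c i : ℤ_[p]) * r ^ i) + r ^ (n + 1) * w := by
    intro n
    induction n with
    | zero =>
      intro x
      obtain ⟨c0, z, hc0, hz⟩ := step x
      exact ⟨fun _ => c0, fun _ => hc0, z, by simpa using hz⟩
    | succ n ih =>
      intro x
      obtain ⟨c0, z, hc0, hz⟩ := step x
      obtain ⟨c', hc', w, hw⟩ := ih z
      refine ⟨fun i => if i = 0 then c0 else c' (i - 1), fun i => by by_cases h : i = 0 <;> simp [h, hc0, hc'], w, ?_⟩
      rw [Finset.sum_range_succ' (fun i => ((if i = 0 then c0 else c' (i - 1) : ℕ) : ℤ_[p]) * r ^ i)]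
      simp only [if_neg (Nat.succ_ne_zero _), if_pos rfl, Nat.add_sub_cancel, pow_zero, mul_one, if_true]
      have : ∑ i ∈ Finset.range (n + 1), ((c' i : ℤ_[p])) * r ^ (i + 1)
          = r * ∑ i ∈ Finset.range (n + 1), (c' i : ℤ_[p]) * r ^ i := by
        rw [Finset.mul_sum]; congr 1; ext i; ring
      rw [this, hz, hw]
      ring
  -- density
  rw [Metric.dense_iff]
  intro x ε hε
  have hrlt : ‖r‖ < 1 := by
    rw [hr]
    apply zpow_lt_one_of_neg₀ hp
    omega
  have htend : Filter.Tendsto (fun n => ‖r‖ ^ n) Filter.atTop (nhds 0) :=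
    tendsto_pow_atTop_nhds_zero_of_lt_one (norm_nonneg r) hrlt
  obtain ⟨n, hn⟩ := (htend.eventually (gt_mem_nhds hε)).exists
  obtain ⟨c, hc, w, hw⟩ := key n x
  refine ⟨∑ i ∈ Finset.range (n + 1), (c i : ℤ_[p]) * r ^ i, ?_, n, c, fun i => by have := hc i; omega, rfl⟩
  rw [Metric.mem_ball, dist_eq_norm, hw]
  have h2 : (∑ i ∈ Finset.range (n + 1), (c i : ℤ_[p]) * r ^ i)
      - ((∑ i ∈ Finset.range (n + 1), (c i : ℤ_[p]) * r ^ i) + r ^ (n + 1) * w)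
      = -(r ^ (n + 1) * w) := by ring
  rw [h2, norm_neg, norm_mul, norm_pow]
  calc ‖r‖ ^ (n + 1) * ‖w‖ ≤ ‖r‖ ^ (n + 1) * 1 := by
        apply mul_le_mul_of_nonneg_left w.norm_le_one (by positivity)
    _ = ‖r‖ ^ n * ‖r‖ := by ring
    _ ≤ ‖r‖ ^ n * 1 := by apply mul_le_mul_of_nonneg_left hrlt.le (by positivity)
    _ < ε := by simpa using hn
end
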